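/- Let K be a commutative ring with ℚ ⊆ K, and let F be the free group on two generators with completed group ring identified, via a group-like expansion, with the ring K⟨⟨X,Y⟩⟩ of noncommutative formal power series. Let X*Y denote the Hausdorff (Baker–Campbell–Hausdorff) series. If z, b, c ∈ K satisfy z·(X*(−Y)) + bX + c·(X*Y) = 0 in K⟨⟨X,Y⟩⟩, then z = 0 (and hence b = c = 0). -/
import Mathlib


/-! We model the completed free associative algebra `K⟨⟨X,Y⟩⟩` (the completed
tensor algebra on two generators) concretely: an element is a function
assigning to each word in the alphabet `Fin 2` its coefficient.  Addition and
scalar multiplication are pointwise, and multiplication is the convolution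
over splittings of a word.  The exponential and logarithm are given by the
usual componentwise-convergent series, and the Hausdorff
(Baker–Campbell–Hausdorff) series is `X*Y := log(exp X · exp Y)`, the unique
(Lie) series with `exp(X*Y) = exp(X)exp(Y)`. -/

/-- The completed tensor algebra on the free module with basis `ι`,
coefficients in `K`. -/
abbrev NCSeries (ι K : Type*) := List ι → K

variable {ι K : Type*} [CommRing K] [Algebra ℚ K]

/-- The unit of `K⟨⟨X,Y⟩⟩`. -/
def oneNC : NCSeries ι K := fun w =>
  match w with
  | [] => 1
  | _ => 0

/-- The multiplication of `K⟨⟨X,Y⟩⟩`. -/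
def mulNC (f g : NCSeries ι K) : NCSeries ι K := fun w =>
  ∑ k ∈ Finset.range (w.length + 1), f (w.take k) * g (w.drop k)

/-- Powers. -/
def pwNC (X : NCSeries ι K) : ℕ → NCSeries ι K
  | 0 => oneNC
  | n + 1 => mulNC X (pwNC X n)

/-- The exponential `exp f = Σₙ fⁿ/n!` of an element with vanishing constant
term (the series is then componentwise finite). -/
def expNC (f : NCSeries ι K) : NCSeries ι K := fun w =>
  ∑ n ∈ Finset.range (w.length + 1),
    algebraMap ℚ K (1 / (Nat.factorial n)) * pwNC f n w

/-- The logarithm `log u = Σ_{n≥1} (−1)^{n−1}(u−1)ⁿ/n` of an element with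
constant term `1` (the series is then componentwise finite). -/
def logNC (u : NCSeries ι K) : NCSeries ι K := fun w =>
  ∑ n ∈ Finset.Icc 1 w.length,
    algebraMap ℚ K ((-1) ^ (n + 1) / n) * pwNC (u - oneNC) n w

/-- The Hausdorff (Baker–Campbell–Hausdorff) series
`f * g = log(exp f · exp g)`. -/
def hausdorffNC (f g : NCSeries ι K) : NCSeries ι K :=
  logNC (mulNC (expNC f) (expNC g))

/-- The generator `X` (resp. `Y`) of `K⟨⟨X,Y⟩⟩` for `i = 0` (resp. `i = 1`). -/
def genNC (i : Fin 2) : NCSeries (Fin 2) K := fun w =>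
  match w with
  | [j] => if j = i then 1 else 0
  | _ => 0

set_option maxHeartbeats 1000000 in
lemma haus1 (e : K) : hausdorffNC (genNC 0) (e • genNC 1 : NCSeries (Fin 2) K) [1] = e := by
  simp [hausdorffNC, logNC, expNC, mulNC, pwNC, oneNC, genNC, Finset.sum_range_succ,
    Finset.Icc_self]

set_option maxHeartbeats 1000000 in
lemma haus0 (e : K) : hausdorffNC (genNC 0) (e • genNC 1 : NCSeries (Fin 2) K) [0] = 1 := by
  simp [hausdorffNC, logNC, expNC, mulNC, pwNC, oneNC, genNC, Finset.sum_range_succ,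
    Finset.Icc_self]

set_option maxHeartbeats 8000000 in
set_option maxRecDepth 4000 in
lemma haus3 (e : K) : hausdorffNC (genNC 0) (e • genNC 1 : NCSeries (Fin 2) K) [1,1,0]
    = algebraMap ℚ K (1/12) * (e * e) := by
  simp (config := { maxSteps := 10000000 }) [hausdorffNC, logNC, expNC, mulNC, pwNC, oneNC,
    genNC, Finset.sum_range_succ, Finset.sum_Icc_succ_top, Finset.Icc_self]
  have h2 : (algebraMap ℚ K) ((-1) ^ 3 / 2) * ((algebraMap ℚ K) 2⁻¹ * (e * e))
      + (algebraMap ℚ K) ((-1) ^ 4 / 3) * (e * e)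
      = (algebraMap ℚ K) ((-1) ^ 3 / 2 * 2⁻¹ + (-1) ^ 4 / 3) * (e * e) := by
    rw [map_add, map_mul]; ring
  rw [h2]
  norm_num

/-- let `K ⊇ ℚ` be a commutative ring, and identify the completed
group ring of the free group on two generators with `K⟨⟨X,Y⟩⟩` via a group-like
expansion.  If `z, b, c ∈ K` satisfy `z·(X*(−Y)) + bX + c·(X*Y) = 0` in
`K⟨⟨X,Y⟩⟩`, where `*` denotes the Hausdorff series, then `z = 0` (and hence
`b = c = 0`). -/
theorem bch_relation_forces_zero (z b c : K)
    (h : z • hausdorffNC (genNC 0) (-genNC 1) + b • (genNC 0 : NCSeries (Fin 2) K)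
        + c • hausdorffNC (genNC 0) (genNC 1) = 0) :
    z = 0 ∧ b = 0 ∧ c = 0 := by
  have hneg : (-genNC 1 : NCSeries (Fin 2) K) = ((-1 : K) • genNC 1) :=
    (neg_one_smul K _).symm
  have hpos : (genNC 1 : NCSeries (Fin 2) K) = ((1 : K) • genNC 1) :=
    (one_smul K _).symm
  have N1 : hausdorffNC (genNC 0) (-genNC 1 : NCSeries (Fin 2) K) [1] = (-1 : K) := by
    rw [hneg, haus1]
  have N0 : hausdorffNC (genNC 0) (-genNC 1 : NCSeries (Fin 2) K) [0] = 1 := by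
    rw [hneg, haus0]
  have N3 : hausdorffNC (genNC 0) (-genNC 1 : NCSeries (Fin 2) K) [1, 1, 0]
      = algebraMap ℚ K (1/12) * ((-1) * (-1)) := by
    rw [hneg, haus3]
  have P1 : hausdorffNC (genNC 0) (genNC 1 : NCSeries (Fin 2) K) [1] = 1 := by
    rw [hpos, haus1]
  have P0 : hausdorffNC (genNC 0) (genNC 1 : NCSeries (Fin 2) K) [0] = 1 := by
    rw [hpos, haus0]
  have P3 : hausdorffNC (genNC 0) (genNC 1 : NCSeries (Fin 2) K) [1, 1, 0]
      = algebraMap ℚ K (1/12) * (1 * 1) := by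
    rw [hpos, haus3]
  have h1 := congrFun h [1]
  have h0 := congrFun h [0]
  have h3 := congrFun h [1, 1, 0]
  simp only [Pi.add_apply, Pi.smul_apply, Pi.zero_apply, smul_eq_mul,
    N1, N0, N3, P1, P0, P3] at h1 h0 h3
  simp only [genNC, show ((1 : Fin 2) = 0) = False by simp, if_false, if_true,
    mul_zero, mul_one, mul_neg, neg_mul, neg_neg, add_zero] at h1 h0 h3
  have hA : algebraMap ℚ K 6 * (algebraMap ℚ K (1/12) + algebraMap ℚ K (1/12)) = 1 := by
    rw [← map_add, ← map_mul]; norm_num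
  have hz : z = 0 := by
    linear_combination - (algebraMap ℚ K 6 * algebraMap ℚ K (1/12)) * h1
      + algebraMap ℚ K 6 * h3 - z * hA
  refine ⟨hz, ?_, ?_⟩
  · linear_combination h0 - h1 - 2 * hz
  · linear_combination h1 + hz
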